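/- Let K be a number field with finite extensions L and E that are linearly disjoint over K; put F = LE, and suppose F/E is Galois (hence so is L/K) with the restriction map Gal(F/E) → Gal(L/K) an isomorphism, identifying both groups with G. Suppose 𝓞_L is locally free over 𝒜_{L/K}, 𝓞_F is locally free over 𝒜_{F/E}, and there exists α ∈ 𝓞_L such that 𝓞_F = 𝒜_{F/E}·α. Then 𝓞_L = 𝒜_{L/K}·α. -/

import Mathlib

noncomputable section

open IntermediateField

set_option synthInstance.maxHeartbeats 1000000
set_option maxHeartbeats 4000000

/-- The action of the group algebra `K[Gal(L/K)]` on `L`, by `K`-linear extension of the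
Galois action. -/
noncomputable def galAct {K L : Type*} [Field K] [Field L] [Algebra K L]
    (x : MonoidAlgebra K (L ≃ₐ[K] L)) (a : L) : L :=
  Finsupp.sum x.coeff fun g c => algebraMap K L c * g a

/-- The associated order `𝒜_{L/K} = { x ∈ K[Gal(L/K)] | x·𝓞_L ⊆ 𝓞_L }`. -/
def assocOrder (K L : Type*) [Field K] [Field L] [Algebra K L] :
    Set (MonoidAlgebra K (L ≃ₐ[K] L)) :=
  { x | ∀ a : L, IsIntegral ℤ a → IsIntegral ℤ (galAct x a) }

/-- `𝓞_L = 𝒜_{L/K}·α`. -/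
def IsAssocOrderGen (K L : Type*) [Field K] [Field L] [Algebra K L] (α : L) : Prop :=
  IsIntegral ℤ α ∧
  (∀ b : L, IsIntegral ℤ b ↔ ∃ x ∈ assocOrder K L, galAct x α = b) ∧
  (∀ x ∈ assocOrder K L, galAct x α = 0 → x = 0)

/-- The localization `𝓞_{L,𝔭}` of `𝓞_L` at a prime `𝔭` of `𝓞_K`, as a subset of `L`. -/
def locO (K L : Type*) [Field K] [Field L] [Algebra K L]
    (P : Ideal (integralClosure ℤ K)) : Set L :=
  {y | ∃ s : integralClosure ℤ K, s ∉ P ∧ IsIntegral ℤ (algebraMap K L ↑s * y)}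

/-- The localization `𝒜_{L/K,𝔭}` of the associated order at a prime `𝔭` of `𝓞_K`. -/
def locA (K L : Type*) [Field K] [Field L] [Algebra K L]
    (P : Ideal (integralClosure ℤ K)) : Set (MonoidAlgebra K (L ≃ₐ[K] L)) :=
  {x | ∃ s : integralClosure ℤ K, s ∉ P ∧ (↑s : K) • x ∈ assocOrder K L}

/-- `𝓞_L` is locally free (of rank one) over `𝒜_{L/K}`. -/
def IsLocallyFree (K L : Type*) [Field K] [Field L] [Algebra K L] : Prop :=
  ∀ P : Ideal (integralClosure ℤ K), P ≠ ⊥ → P.IsPrime →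
    ∃ β ∈ locO K L P,
      (∀ y ∈ locO K L P, ∃ x ∈ locA K L P, galAct x β = y) ∧
      (∀ x ∈ locA K L P, galAct x β = 0 → x = 0)

section GalActBasics

variable {K L : Type*} [Field K] [Field L] [Algebra K L]

theorem galAct_zero' (a : L) : galAct (0 : MonoidAlgebra K (L ≃ₐ[K] L)) a = 0 :=
  Finsupp.sum_zero_index

theorem galAct_add' (x y : MonoidAlgebra K (L ≃ₐ[K] L)) (a : L) :
    galAct (x + y) a = galAct x a + galAct y a := by
  classical
  exact Finsupp.sum_add_index (by simp) (by intros; simp [add_mul])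

/-- `galAct · a` as an additive monoid hom. -/
noncomputable def galActHom (a : L) : MonoidAlgebra K (L ≃ₐ[K] L) →+ L where
  toFun x := galAct x a
  map_zero' := galAct_zero' a
  map_add' x y := galAct_add' x y a

theorem galAct_zsmul' (n : ℤ) (x : MonoidAlgebra K (L ≃ₐ[K] L)) (a : L) :
    galAct (n • x) a = n • galAct x a :=
  map_zsmul (galActHom a) n x

theorem galAct_sub' (x y : MonoidAlgebra K (L ≃ₐ[K] L)) (a : L) :
    galAct (x - y) a = galAct x a - galAct y a :=
  map_sub (galActHom a) x y

theorem galAct_single' (g : L ≃ₐ[K] L) (c : K) (a : L) :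
    galAct (MonoidAlgebra.single g c) a = algebraMap K L c * g a :=
  Finsupp.sum_single_index (by simp)

theorem galAct_fintype_sum [Fintype (L ≃ₐ[K] L)] (x : MonoidAlgebra K (L ≃ₐ[K] L)) (a : L) :
    galAct x a = ∑ g : (L ≃ₐ[K] L), algebraMap K L (x.coeff g) * g a :=
  Finsupp.sum_fintype _ _ (by simp)

theorem galAct_sum_single {ι : Type*} (s : Finset ι) (σ : ι → (L ≃ₐ[K] L)) (e : ι → K) (a : L) :
    galAct (∑ i ∈ s, MonoidAlgebra.single (σ i) (e i)) a =
      ∑ i ∈ s, algebraMap K L (e i) * (σ i) a := by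
  show (galActHom a) _ = _
  rw [map_sum]
  exact Finset.sum_congr rfl fun i _ => galAct_single' (σ i) (e i) a

theorem isIntegral_galAct {x : MonoidAlgebra K (L ≃ₐ[K] L)}
    (hx : ∀ g ∈ x.coeff.support, IsIntegral ℤ (x.coeff g)) {a : L} (ha : IsIntegral ℤ a) :
    IsIntegral ℤ (galAct x a) := by
  rw [show galAct x a = ∑ g ∈ x.coeff.support, algebraMap K L (x.coeff g) * g a from rfl]
  refine (integralClosure ℤ L).sum_mem fun g hg => (integralClosure ℤ L).mul_mem ?_ ?_
  · exact IsIntegral.map (algebraMap K L).toIntAlgHom (hx g hg)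
  · exact IsIntegral.map ((g : L ≃+* L) : L →+* L).toIntAlgHom ha

end GalActBasics

theorem isIntegral_coe_iff {F C : Type*} [Field F] [Field C] [Algebra F C]
    (S : IntermediateField F C) (z : ↥S) : IsIntegral ℤ z ↔ IsIntegral ℤ (z : C) :=
  (isIntegral_algHom_iff S.val.toRingHom.toIntAlgHom Subtype.val_injective).symm

theorem exists_int_smul_integral {k : Type*} [Field k] [CharZero k] {c : k}
    (hc : IsAlgebraic ℤ c) : ∃ n : ℤ, n ≠ 0 ∧ IsIntegral ℤ (n • c) := by
  obtain ⟨y, hy, hxy⟩ := hc.exists_integral_multiple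
  exact ⟨y, hy, hxy⟩

/-- Faithfulness of the action on a generator extends from the associated order to the
whole group algebra, by clearing denominators. -/
theorem galAct_faithful_all {k L : Type*} [Field k] [Field L] [Algebra k L] [CharZero k]
    (halg : ∀ c : k, IsAlgebraic ℤ c) {α : L}
    (hfaith : ∀ x ∈ assocOrder k L, galAct x α = 0 → x = 0) :
    ∀ x : MonoidAlgebra k (L ≃ₐ[k] L), galAct x α = 0 → x = 0 := by
  classical
  intro x hx0
  choose n hn hni using fun g : (L ≃ₐ[k] L) => exists_int_smul_integral (halg (x.coeff g))
  set N : ℤ := ∏ g ∈ x.coeff.support, n g with hNdef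
  have hN : N ≠ 0 := Finset.prod_ne_zero_iff.mpr fun g _ => hn g
  have hcoef : ∀ g, IsIntegral ℤ ((N • x).coeff g) := by
    intro g
    rw [MonoidAlgebra.coeff_smul_apply]
    by_cases hg : g ∈ x.coeff.support
    · have hNfact : N = n g * ∏ h ∈ x.coeff.support.erase g, n h :=
        (Finset.mul_prod_erase _ _ hg).symm
      rw [hNfact, mul_comm, mul_smul]
      exact Subalgebra.smul_mem (integralClosure ℤ k) (hni g) _
    · rw [Finsupp.notMem_support_iff.mp hg, smul_zero]
      exact isIntegral_zero
  have hmem : N • x ∈ assocOrder k L := fun a ha =>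
    isIntegral_galAct (fun g _ => hcoef g) ha
  have hzero : N • x = 0 := hfaith _ hmem (by rw [galAct_zsmul', hx0, smul_zero])
  ext g
  have h1 : (N : k) * x.coeff g = 0 := by
    have : (N • x).coeff g = (0 : MonoidAlgebra k (L ≃ₐ[k] L)).coeff g := by rw [hzero]
    rwa [MonoidAlgebra.coeff_smul_apply, zsmul_eq_mul, MonoidAlgebra.coeff_zero, Finsupp.coe_zero, Pi.zero_apply] at this
  rcases mul_eq_zero.mp h1 with h | h
  · exact absurd h (by exact_mod_cast hN)
  · simpa using h

theorem coe_galAct_fintype {F C : Type*} [Field F] [Field C] [Algebra F C]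
    (S : IntermediateField F C) [Fintype (↥S ≃ₐ[F] ↥S)]
    (x : MonoidAlgebra F (↥S ≃ₐ[F] ↥S)) (a : ↥S) :
    ((galAct x a : ↥S) : C) = ∑ g : (↥S ≃ₐ[F] ↥S), algebraMap F C (x.coeff g) * ((g a : ↥S) : C) := by
  rw [galAct_fintype_sum]
  rw [show ((∑ g : (↥S ≃ₐ[F] ↥S), algebraMap F ↥S (x.coeff g) * g a : ↥S) : C)
      = ∑ g : (↥S ≃ₐ[F] ↥S), ((algebraMap F ↥S (x.coeff g) * g a : ↥S) : C) from by push_cast; rfl]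
  refine Finset.sum_congr rfl fun g _ => ?_
  push_cast
  congr 1

theorem coe_smul_IF {F C : Type*} [Field F] [Field C] [Algebra F C]
    (S : IntermediateField F C) (k : F) (z : ↥S) :
    ((k • z : ↥S) : C) = algebraMap F C k * ↑z := by
  rw [Algebra.smul_def]
  push_cast
  congr 1

theorem coe_sum_IF {F C ι : Type*} [Field F] [Field C] [Algebra F C]
    (S : IntermediateField F C) (s : Finset ι) (f : ι → ↥S) :
    ((∑ i ∈ s, f i : ↥S) : C) = ∑ i ∈ s, ((f i : ↥S) : C) := by
  push_cast; rfl

theorem coe_inj_IF {F C : Type*} [Field F] [Field C] [Algebra F C]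
    {S : IntermediateField F C} {z w : ↥S} (h : ((z : ↥S) : C) = ((w : ↥S) : C)) : z = w :=
  Subtype.coe_injective h

theorem finsupp_sum_single_apply {ι M : Type*} [Fintype ι] [DecidableEq ι]
    [AddCommMonoid M] (e : ι → M) (g' : ι) :
    (∑ g : ι, Finsupp.single g (e g)) g' = e g' := by
  rw [Finsupp.finset_sum_apply]
  simp [Finsupp.single_apply]

section Restriction

noncomputable def incLF {K L E : IntermediateField ℚ ℂ} (hKL : K ≤ L) :
    ↥(extendScalars hKL) →+* ↥(extendScalars (le_sup_right : E ≤ L ⊔ E)) where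
  toFun z := ⟨↑z, (le_sup_left : L ≤ L ⊔ E) z.2⟩
  map_one' := rfl
  map_mul' _ _ := rfl
  map_zero' := rfl
  map_add' _ _ := rfl

@[simp] theorem incLF_coe {K L E : IntermediateField ℚ ℂ} (hKL : K ≤ L)
    (z : ↥(extendScalars hKL)) : ((incLF (E := E) hKL z) : ℂ) = ↑z := rfl

noncomputable def bigHom {K L E : IntermediateField ℚ ℂ} (hKL : K ≤ L) (hKE : K ≤ E)
    (g : ↥(extendScalars (le_sup_right : E ≤ L ⊔ E)) ≃ₐ[↥E]
    ↥(extendScalars (le_sup_right : E ≤ L ⊔ E))) :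
    ↥(extendScalars hKL) →ₐ[↥K] ℂ :=
  AlgHom.mk'
    (((extendScalars (le_sup_right : E ≤ L ⊔ E)).val.toRingHom).comp
      ((g.toAlgHom.toRingHom).comp (incLF hKL)))
    (fun c z => by
      have key : (incLF hKL) (c • z) =
          algebraMap ↥E ↥(extendScalars (le_sup_right : E ≤ L ⊔ E)) ⟨↑c, hKE c.2⟩ *
          (incLF hKL) z := by
        apply Subtype.ext
        push_cast
        simp [Algebra.smul_def]
      simp only [RingHom.comp_apply, key, map_mul, AlgHom.toRingHom_eq_coe,
        RingHom.coe_coe, AlgEquiv.coe_algHom, AlgEquiv.commutes]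
      have hval : ∀ w : ↥(extendScalars (le_sup_right : E ≤ L ⊔ E)),
          (extendScalars (le_sup_right : E ≤ L ⊔ E)).val w = (w : ℂ) := fun _ => rfl
      simp only [hval]
      rw [show ((algebraMap ↥E ↥(extendScalars (le_sup_right : E ≤ L ⊔ E)) ⟨↑c, hKE c.2⟩ :
          ↥(extendScalars (le_sup_right : E ≤ L ⊔ E))) : ℂ) = (c : ℂ) from by simp,
        show ∀ x : ℂ, c • x = ↑c * x from fun x => by rw [Algebra.smul_def]; simp])

theorem bigHom_apply {K L E : IntermediateField ℚ ℂ} (hKL : K ≤ L) (hKE : K ≤ E)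
    (g : ↥(extendScalars (le_sup_right : E ≤ L ⊔ E)) ≃ₐ[↥E]
    ↥(extendScalars (le_sup_right : E ≤ L ⊔ E))) (z : ↥(extendScalars hKL)) :
    bigHom hKL hKE g z = ↑(g (incLF hKL z)) := rfl

noncomputable def rho {K L E : IntermediateField ℚ ℂ} (hKL : K ≤ L) (hKE : K ≤ E)
    (hgalLK : IsGalois ↥K ↥(extendScalars hKL))
    (g : ↥(extendScalars (le_sup_right : E ≤ L ⊔ E)) ≃ₐ[↥E]
      ↥(extendScalars (le_sup_right : E ≤ L ⊔ E))) :
    ↥(extendScalars hKL) ≃ₐ[↥K] ↥(extendScalars hKL) :=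
  haveI := hgalLK.to_normal
  AlgHom.restrictNormal' (bigHom hKL hKE g) ↥(extendScalars hKL)

theorem rho_coe {K L E : IntermediateField ℚ ℂ} (hKL : K ≤ L) (hKE : K ≤ E)
    (hgalLK : IsGalois ↥K ↥(extendScalars hKL))
    (g : ↥(extendScalars (le_sup_right : E ≤ L ⊔ E)) ≃ₐ[↥E]
      ↥(extendScalars (le_sup_right : E ≤ L ⊔ E))) (z : ↥(extendScalars hKL)) :
    ((rho hKL hKE hgalLK g z : ↥(extendScalars hKL)) : ℂ) = ↑(g (incLF hKL z)) := by
  haveI := hgalLK.to_normal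
  have h := AlgHom.restrictNormal_commutes (bigHom hKL hKE g) ↥(extendScalars hKL) z
  rw [show rho hKL hKE hgalLK g z =
    (bigHom hKL hKE g).restrictNormal ↥(extendScalars hKL) z from rfl]
  have h2 : algebraMap ↥(extendScalars hKL) ℂ
      ((bigHom hKL hKE g).restrictNormal ↥(extendScalars hKL) z) = bigHom hKL hKE g z := by
    rw [h, Algebra.algebraMap_self]; rfl
  rw [← bigHom_apply hKL hKE g z]
  exact h2

end Restriction

/-- Let `K` be a number field with finite extensions `L` and `E` that
are linearly disjoint over `K`, let `F = LE`, and suppose `F/E` and `L/K` are Galois.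
Suppose `𝓞_L` and `𝓞_F` are locally free over `𝒜_{L/K}` and `𝒜_{F/E}` respectively, and
that `α ∈ 𝓞_L` satisfies `𝓞_F = 𝒜_{F/E}·α`.  Then `𝓞_L = 𝒜_{L/K}·α`. -/



theorem stmt8 (K L E : IntermediateField ℚ ℂ) (hKL : K ≤ L) (hKE : K ≤ E)
    (hfinL : FiniteDimensional ℚ ↥L) (hfinE : FiniteDimensional ℚ ↥E)
    (hgalLK : IsGalois ↥K ↥(IntermediateField.extendScalars hKL))
    (hgalFE : IsGalois ↥E ↥(IntermediateField.extendScalars (le_sup_right : E ≤ L ⊔ E)))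
    -- linear disjointness of `L` and `E` over `K`: `[LE : K] = [L : K]·[E : K]`
    (hld : Module.finrank ↥K
        ↥(IntermediateField.extendScalars (hKL.trans le_sup_left : K ≤ L ⊔ E)) =
      Module.finrank ↥K ↥(IntermediateField.extendScalars hKL) *
        Module.finrank ↥K ↥(IntermediateField.extendScalars hKE))
    (hlfL : IsLocallyFree ↥K ↥(IntermediateField.extendScalars hKL))
    (hlfF : IsLocallyFree ↥E ↥(IntermediateField.extendScalars (le_sup_right : E ≤ L ⊔ E)))
    (α : ℂ) (hαL : α ∈ L)
    (hgenF : IsAssocOrderGen ↥E ↥(IntermediateField.extendScalars (le_sup_right : E ≤ L ⊔ E))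
      ⟨α, (IntermediateField.mem_extendScalars _).mpr (SetLike.le_def.mp le_sup_left hαL)⟩) :
    IsAssocOrderGen ↥K ↥(IntermediateField.extendScalars hKL) ⟨α, hαL⟩ := by
  classical
  set αL : ↥(extendScalars hKL) := ⟨α, hαL⟩ with hαLdef
  set αF : ↥(extendScalars (le_sup_right : E ≤ L ⊔ E)) :=
    ⟨α, (IntermediateField.mem_extendScalars _).mpr (SetLike.le_def.mp le_sup_left hαL)⟩
    with hαFdef
  -- finiteness instances
  haveI : FiniteDimensional ℚ ↥(extendScalars hKL) := hfinL
  haveI : FiniteDimensional ↥K ↥(extendScalars hKL) :=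
    Module.Finite.of_restrictScalars_finite ℚ ↥K ↥(extendScalars hKL)
  haveI hfinLE : FiniteDimensional ℚ ↥(L ⊔ E) := IntermediateField.finiteDimensional_sup L E
  haveI : FiniteDimensional ℚ ↥(extendScalars (le_sup_right : E ≤ L ⊔ E)) := hfinLE
  haveI : FiniteDimensional ↥E ↥(extendScalars (le_sup_right : E ≤ L ⊔ E)) :=
    Module.Finite.of_restrictScalars_finite ℚ ↥E ↥(extendScalars (le_sup_right : E ≤ L ⊔ E))
  haveI : FiniteDimensional ℚ ↥(extendScalars hKE) := hfinE
  haveI : FiniteDimensional ↥K ↥(extendScalars hKE) :=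
    Module.Finite.of_restrictScalars_finite ℚ ↥K ↥(extendScalars hKE)
  haveI : Algebra.IsAlgebraic ℚ ↥E := Algebra.IsAlgebraic.of_finite ℚ ↥E
  have halgE : ∀ c : ↥E, IsAlgebraic ℤ c := fun c =>
    (IsFractionRing.isAlgebraic_iff ℤ ℚ ↥E).mpr (Algebra.IsAlgebraic.isAlgebraic c)
  have faithE : ∀ x : MonoidAlgebra ↥E
      (↥(extendScalars (le_sup_right : E ≤ L ⊔ E)) ≃ₐ[↥E]
        ↥(extendScalars (le_sup_right : E ≤ L ⊔ E))),
      galAct x αF = 0 → x = 0 :=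
    galAct_faithful_all halgE hgenF.2.2
  -- degree bookkeeping
  have hcardEq : Module.finrank ↥E ↥(extendScalars (le_sup_right : E ≤ L ⊔ E)) =
      Module.finrank ↥K ↥(extendScalars hKL) := by
    have t1 := IntermediateField.relfinrank_mul_relfinrank hKE (le_sup_right : E ≤ L ⊔ E)
    rw [IntermediateField.relfinrank_eq_finrank_of_le hKE,
      IntermediateField.relfinrank_eq_finrank_of_le (le_sup_right : E ≤ L ⊔ E),
      IntermediateField.relfinrank_eq_finrank_of_le (hKL.trans le_sup_left : K ≤ L ⊔ E)] at t1
    rw [hld, mul_comm (Module.finrank ↥K ↥(extendScalars hKL))] at t1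
    exact Nat.eq_of_mul_eq_mul_left (Module.finrank_pos (R := ↥K) (M := ↥(extendScalars hKE))) t1
  -- the restriction map and conjugates of α
  have hααF : incLF hKL αL = αF := rfl
  set v : (↥(extendScalars (le_sup_right : E ≤ L ⊔ E)) ≃ₐ[↥E]
      ↥(extendScalars (le_sup_right : E ≤ L ⊔ E))) → ↥(extendScalars hKL) :=
    fun g => rho hKL hKE hgalLK g αL with hvdef
  have hvcoe : ∀ g, ((v g : ↥(extendScalars hKL)) : ℂ) = ↑(g αF) := fun g => by
    rw [hvdef]; rw [rho_coe, hααF]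
  -- linear independence of the conjugates of α over K
  have hli : LinearIndependent ↥K v := by
    rw [Fintype.linearIndependent_iff]
    intro c hc
    set xE : MonoidAlgebra ↥E (↥(extendScalars (le_sup_right : E ≤ L ⊔ E)) ≃ₐ[↥E]
        ↥(extendScalars (le_sup_right : E ≤ L ⊔ E))) := ∑ g : (↥(extendScalars (le_sup_right : E ≤ L ⊔ E)) ≃ₐ[↥E]
        ↥(extendScalars (le_sup_right : E ≤ L ⊔ E))),
      MonoidAlgebra.single g (⟨(c g : ℂ), hKE (c g).2⟩ : ↥E) with hxEdef
    have hxEapp : ∀ g, xE.coeff g = ⟨(c g : ℂ), hKE (c g).2⟩ := fun g => by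
      rw [hxEdef, MonoidAlgebra.coeff_sum]; exact finsupp_sum_single_apply _ g
    have hterm : ∀ g, algebraMap ↥E ℂ (xE.coeff g) * ((g αF : _) : ℂ) =
        ((c g • v g : ↥(extendScalars hKL)) : ℂ) := by
      intro g
      rw [hxEapp g, ← hvcoe g, coe_smul_IF]
      congr 1
      all_goals simp
    have hco : ((galAct xE αF : _) : ℂ) = ∑ g, ((c g • v g : ↥(extendScalars hKL)) : ℂ) := by
      rw [coe_galAct_fintype]
      exact Finset.sum_congr rfl fun g _ => hterm g
    have hvsum : ∑ g, ((c g • v g : ↥(extendScalars hKL)) : ℂ) = 0 := by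
      rw [← coe_sum_IF, hc]
      simp
    have hgal0 : galAct xE αF = 0 := by
      refine coe_inj_IF ?_
      rw [hco, hvsum]
      simp
    have hxE0 := faithE xE hgal0
    intro g
    have h := congrArg (fun w => ((w.coeff g : ↥E) : ℂ)) hxE0
    simp only [hxEapp g, MonoidAlgebra.coeff_zero, Finsupp.coe_zero, Pi.zero_apply, ZeroMemClass.coe_zero] at h
    exact_mod_cast h
  -- conjugates form a basis
  have hcardF : Fintype.card (↥(extendScalars (le_sup_right : E ≤ L ⊔ E)) ≃ₐ[↥E]
      ↥(extendScalars (le_sup_right : E ≤ L ⊔ E))) =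
      Module.finrank ↥K ↥(extendScalars hKL) := by
    rw [← Nat.card_eq_fintype_card, IsGalois.card_aut_eq_finrank ↥E ↥(extendScalars (le_sup_right : E ≤ L ⊔ E)), hcardEq]
  let bas : Module.Basis _ ↥K ↥(extendScalars hKL) := basisOfLinearIndependentOfCardEqFinrank hli hcardF
  have hbas : ⇑bas = v := coe_basisOfLinearIndependentOfCardEqFinrank hli hcardF
  have hρinj : Function.Injective (rho hKL hKE hgalLK) := by
    intro g g' h
    apply bas.injective
    rw [hbas]
    show rho hKL hKE hgalLK g αL = rho hKL hKE hgalLK g' αL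
    rw [h]
  have hρbij : Function.Bijective (rho hKL hKE hgalLK) := by
    rw [Fintype.bijective_iff_injective_and_card]
    refine ⟨hρinj, ?_⟩
    rw [hcardF, ← Nat.card_eq_fintype_card, IsGalois.card_aut_eq_finrank ↥K ↥(extendScalars hKL)]
  -- α is integral
  have hαint : IsIntegral ℤ αL := by
    rw [isIntegral_coe_iff]
    exact (isIntegral_coe_iff _ αF).mp hgenF.1
  -- main surjectivity statement
  have main : ∀ b : ↥(extendScalars hKL), IsIntegral ℤ b →
      ∃ x ∈ assocOrder ↥K ↥(extendScalars hKL), galAct x αL = b := by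
    intro b hb
    have hbF : IsIntegral ℤ (incLF (E := E) hKL b) := by
      rw [isIntegral_coe_iff, incLF_coe]
      exact (isIntegral_coe_iff _ b).mp hb
    obtain ⟨y, hy, hyb⟩ := (hgenF.2.1 _).mp hbF
    set d : _ → ↥K := fun g => bas.repr b g with hddef
    have hsum : ∑ g, d g • v g = b := by
      conv_rhs => rw [← Module.Basis.sum_repr bas b]
      exact Finset.sum_congr rfl fun g _ => by rw [hbas]
    set xd : MonoidAlgebra ↥E (↥(extendScalars (le_sup_right : E ≤ L ⊔ E)) ≃ₐ[↥E]
        ↥(extendScalars (le_sup_right : E ≤ L ⊔ E))) := ∑ g : (↥(extendScalars (le_sup_right : E ≤ L ⊔ E)) ≃ₐ[↥E]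
        ↥(extendScalars (le_sup_right : E ≤ L ⊔ E))),
      MonoidAlgebra.single g (⟨(d g : ℂ), hKE (d g).2⟩ : ↥E) with hxddef
    have hxdapp : ∀ g, xd.coeff g = ⟨(d g : ℂ), hKE (d g).2⟩ := fun g => by
      rw [hxddef, MonoidAlgebra.coeff_sum]; exact finsupp_sum_single_apply _ g
    have hterm : ∀ g, algebraMap ↥E ℂ (xd.coeff g) * ((g αF : _) : ℂ) =
        ((d g • v g : ↥(extendScalars hKL)) : ℂ) := by
      intro g
      rw [hxdapp g, ← hvcoe g, coe_smul_IF]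
      congr 1
      all_goals simp
    have hgalxd : galAct xd αF = incLF hKL b := by
      refine coe_inj_IF ?_
      rw [coe_galAct_fintype, incLF_coe]
      rw [Finset.sum_congr rfl fun g _ => hterm g]
      rw [← coe_sum_IF, hsum]
    have hyxd : y = xd := by
      have h0 : galAct (y - xd) αF = 0 := by
        rw [galAct_sub', hyb, hgalxd, sub_self]
      have := faithE _ h0
      exact sub_eq_zero.mp this
    have hyco : ∀ g, ((y.coeff g : ↥E) : ℂ) = ((d g : ↥K) : ℂ) := by
      intro g
      rw [hyxd, hxdapp g]
    -- the element of the group algebra over K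
    set xK : MonoidAlgebra ↥K (↥(extendScalars hKL) ≃ₐ[↥K] ↥(extendScalars hKL)) := ∑ g : (↥(extendScalars (le_sup_right : E ≤ L ⊔ E)) ≃ₐ[↥E]
        ↥(extendScalars (le_sup_right : E ≤ L ⊔ E))),
      MonoidAlgebra.single (rho hKL hKE hgalLK g) (d g) with hxKdef
    have hxKco : ∀ a : ↥(extendScalars hKL),
        ((galAct xK a : _) : ℂ) = ((galAct y (incLF hKL a) : _) : ℂ) := by
      intro a
      rw [hxKdef, galAct_sum_single, coe_galAct_fintype, coe_sum_IF]
      refine Finset.sum_congr rfl fun g _ => ?_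
      rw [show (((algebraMap ↥K ↥(extendScalars hKL) (d g) *
          (rho hKL hKE hgalLK g) a) : ↥(extendScalars hKL)) : ℂ) =
          ((algebraMap ↥K ↥(extendScalars hKL) (d g) : ↥(extendScalars hKL)) : ℂ) *
          (((rho hKL hKE hgalLK g) a : ↥(extendScalars hKL)) : ℂ) from by push_cast; rfl]
      rw [rho_coe]
      congr 1
      rw [show ((algebraMap ↥K ↥(extendScalars hKL) (d g) : ↥(extendScalars hKL)) : ℂ)
          = ((d g : ↥K) : ℂ) from by simp, ← hyco g]
      simp
    refine ⟨xK, ?_, ?_⟩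
    · intro a ha
      rw [isIntegral_coe_iff, hxKco]
      rw [← isIntegral_coe_iff]
      refine hy _ ?_
      rw [isIntegral_coe_iff, incLF_coe]
      exact (isIntegral_coe_iff _ a).mp ha
    · refine coe_inj_IF ?_
      rw [hxKco αL, hααF, hyb, incLF_coe]
  -- assemble
  refine ⟨hαint, fun b => ⟨fun hb => main b hb, ?_⟩, ?_⟩
  · rintro ⟨x, hx, rfl⟩
    exact hx αL hαint
  · intro x hx hx0
    set xE : MonoidAlgebra ↥E (↥(extendScalars (le_sup_right : E ≤ L ⊔ E)) ≃ₐ[↥E]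
        ↥(extendScalars (le_sup_right : E ≤ L ⊔ E))) := ∑ g : (↥(extendScalars (le_sup_right : E ≤ L ⊔ E)) ≃ₐ[↥E]
        ↥(extendScalars (le_sup_right : E ≤ L ⊔ E))),
      MonoidAlgebra.single g (⟨(x.coeff (rho hKL hKE hgalLK g) : ℂ),
        hKE (x.coeff (rho hKL hKE hgalLK g)).2⟩ : ↥E) with hxEdef
    have hxEapp : ∀ g, xE.coeff g = ⟨(x.coeff (rho hKL hKE hgalLK g) : ℂ),
        hKE (x.coeff (rho hKL hKE hgalLK g)).2⟩ := fun g => by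
      rw [hxEdef, MonoidAlgebra.coeff_sum]; exact finsupp_sum_single_apply _ g
    have hco : ((galAct xE αF : _) : ℂ) = ((galAct x αL : _) : ℂ) := by
      rw [coe_galAct_fintype, coe_galAct_fintype]
      rw [← Function.Bijective.sum_comp hρbij
        (fun σ => algebraMap ↥K ℂ (x.coeff σ) * ((σ αL : ↥(extendScalars hKL)) : ℂ))]
      refine Finset.sum_congr rfl fun g _ => ?_
      rw [hxEapp g,
        show (((rho hKL hKE hgalLK g) αL : ↥(extendScalars hKL)) : ℂ) =
          ((v g : ↥(extendScalars hKL)) : ℂ) from rfl, hvcoe g]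
      congr 1
      all_goals simp
    have hgal0 : galAct xE αF = 0 := by
      refine coe_inj_IF ?_
      rw [hco, hx0]
      simp
    have hxE0 := faithE xE hgal0
    have hzero : ∀ g, x.coeff (rho hKL hKE hgalLK g) = 0 := by
      intro g
      have h := congrArg (fun w => ((w.coeff g : ↥E) : ℂ)) hxE0
      simp only [hxEapp g, MonoidAlgebra.coeff_zero, Finsupp.coe_zero, Pi.zero_apply, ZeroMemClass.coe_zero] at h
      exact_mod_cast h
    ext σ
    obtain ⟨g, rfl⟩ := hρbij.2 σ
    simpa using hzero g


end
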